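/- arXiv:1508.03416 — 3 statements merged into one kernel-verified Lean document; each statement's English description precedes it below -/
import Mathlib

section
/- Let I be a symmetric positive definite k×k real matrix, L a k×d real matrix of rank d, and R a k×(k-d) real matrix of rank k-d such that L^T R = 0 and the k×k matrix (L R) is nonsingular. Then L(L^T I L)^{-1} L^T = I^{-1} - I^{-1} R (R^T I^{-1} R)^{-1} R^T I^{-1}. -/
open Matrix

private lemma aux_mulVec_injective {m n : Type*} [Fintype m] [Fintype n]
    (A : Matrix m n ℝ) (h : A.rank = Fintype.card n) :
    Function.Injective A.mulVec := by
  rw [← Matrix.coe_mulVecLin, ← LinearMap.ker_eq_bot]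
  have hrn := LinearMap.finrank_range_add_finrank_ker A.mulVecLin
  rw [Module.finrank_pi ℝ] at hrn
  have hrank : A.rank = Module.finrank ℝ (LinearMap.range A.mulVecLin) := rfl
  rw [hrank] at h
  have hk : Module.finrank ℝ (LinearMap.ker A.mulVecLin) = 0 := by omega
  exact Submodule.finrank_eq_zero.mp hk

private lemma aux_posdef {m n : Type*} [Fintype m] [Fintype n]
    (M : Matrix m m ℝ) (hM : M.PosDef) (B : Matrix m n ℝ)
    (hB : Function.Injective B.mulVec) : (Bᵀ * M * B).PosDef := by
  have key : (Bᴴ * M * B).PosDef := by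
    refine PosDef.of_dotProduct_mulVec_pos (isHermitian_conjTranspose_mul_mul B hM.1) fun x hx => ?_
    have hBx : B *ᵥ x ≠ 0 := by
      intro h0
      exact hx (hB (show B *ᵥ x = B *ᵥ 0 by simpa using h0))
    simpa only [star_mulVec, dotProduct_mulVec, vecMul_vecMul] using hM.dotProduct_mulVec_pos hBx
  rwa [conjTranspose_eq_transpose_of_trivial] at key

/-- For symmetric positive definite `I`, full column rank `L` and `R`
with orthogonal column spaces such that `(L R)` is nonsingular,
`L(LᵀIL)⁻¹Lᵀ = I⁻¹ - I⁻¹R(RᵀI⁻¹R)⁻¹RᵀI⁻¹`. -/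
theorem stmt0 {k d : ℕ} (I : Matrix (Fin k) (Fin k) ℝ)
    (hI : I.PosDef) (hIsym : I.IsSymm)
    (L : Matrix (Fin k) (Fin d) ℝ) (R : Matrix (Fin k) (Fin (k - d)) ℝ)
    (hL : L.rank = d) (hR : R.rank = k - d)
    (hLR : Lᵀ * R = 0)
    (hfull : (Matrix.fromCols L R).rank = k) :
    L * (Lᵀ * I * L)⁻¹ * Lᵀ = I⁻¹ - I⁻¹ * R * (Rᵀ * I⁻¹ * R)⁻¹ * Rᵀ * I⁻¹ := by
  have hdk : d ≤ k := hL ▸ L.rank_le_height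
  have hIinv : (I⁻¹).PosDef := hI.inv
  have hIdet : IsUnit I.det := (isUnit_iff_isUnit_det I).mp hI.isUnit
  have hLinj : Function.Injective L.mulVec :=
    aux_mulVec_injective L (by simpa using hL)
  have hRinj : Function.Injective R.mulVec :=
    aux_mulVec_injective R (by simpa using hR)
  have hLILpd : (Lᵀ * I * L).PosDef := aux_posdef I hI L hLinj
  have hRIRpd : (Rᵀ * I⁻¹ * R).PosDef := aux_posdef I⁻¹ hIinv R hRinj
  have hLILdet : IsUnit (Lᵀ * I * L).det := (isUnit_iff_isUnit_det _).mp hLILpd.isUnit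
  have hRIRdet : IsUnit (Rᵀ * I⁻¹ * R).det := (isUnit_iff_isUnit_det _).mp hRIRpd.isUnit
  have hRL : Rᵀ * L = 0 := by
    have := congrArg Matrix.transpose hLR
    simpa [Matrix.transpose_mul] using this
  set A := L * (Lᵀ * I * L)⁻¹ * Lᵀ with hAdef
  set B := I⁻¹ - I⁻¹ * R * (Rᵀ * I⁻¹ * R)⁻¹ * Rᵀ * I⁻¹ with hBdef
  have hLILdet' : IsUnit (Lᵀ * (I * L)).det := by rwa [← Matrix.mul_assoc]
  have hRIRdet' : IsUnit (Rᵀ * (I⁻¹ * R)).det := by rwa [← Matrix.mul_assoc]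
  have hII : I⁻¹ * (I * L) = L := by
    rw [← Matrix.mul_assoc, Matrix.nonsing_inv_mul I hIdet, Matrix.one_mul]
  have e1 : A * (I * L) = L := by
    rw [hAdef]
    simp only [Matrix.mul_assoc]
    rw [Matrix.nonsing_inv_mul _ hLILdet', Matrix.mul_one]
  have e2 : A * R = 0 := by
    rw [hAdef]
    simp only [Matrix.mul_assoc]
    rw [hLR, Matrix.mul_zero, Matrix.mul_zero]
  have e3 : B * (I * L) = L := by
    rw [hBdef, Matrix.sub_mul, hII]
    have h2 : I⁻¹ * R * (Rᵀ * I⁻¹ * R)⁻¹ * Rᵀ * I⁻¹ * (I * L) = 0 := by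
      simp only [Matrix.mul_assoc]
      rw [show I⁻¹ * (I * L) = L from by
        rw [← Matrix.mul_assoc, Matrix.nonsing_inv_mul I hIdet, Matrix.one_mul]]
      rw [hRL, Matrix.mul_zero, Matrix.mul_zero, Matrix.mul_zero]
    rw [h2, sub_zero]
  have e4 : B * R = 0 := by
    rw [hBdef, Matrix.sub_mul]
    have h2 : I⁻¹ * R * (Rᵀ * I⁻¹ * R)⁻¹ * Rᵀ * I⁻¹ * R = I⁻¹ * R := by
      simp only [Matrix.mul_assoc]
      rw [Matrix.nonsing_inv_mul _ hRIRdet', Matrix.mul_one]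
    rw [h2, sub_self]
  -- the matrix with columns (I*L) and R
  set N : Matrix (Fin k) (Fin d ⊕ Fin (k - d)) ℝ := fromCols (I * L) R with hNdef
  have hNzero : ∀ v, N *ᵥ v = 0 → v = 0 := by
    intro v hv
    set a := v ∘ Sum.inl with hadef
    set b := v ∘ Sum.inr with hbdef
    have hvelim : v = Sum.elim a b := (Sum.elim_comp_inl_inr v).symm
    rw [hvelim, hNdef, fromCols_mulVec_sumElim] at hv
    have ha : (Lᵀ * I * L) *ᵥ a = 0 := by
      have := congrArg (fun w => Lᵀ *ᵥ w) hv
      simpa [Matrix.mulVec_add, Matrix.mulVec_mulVec, ← Matrix.mul_assoc, hLR] using this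
    have ha0 : a = 0 := by
      have hinj : Function.Injective (Lᵀ * I * L).mulVec :=
        Matrix.mulVec_injective_iff_isUnit.mpr hLILpd.isUnit
      exact hinj (by simpa using ha)
    rw [ha0] at hv
    have hb0 : b = 0 := by
      have : R *ᵥ b = 0 := by simpa using hv
      exact hRinj (by simpa using this)
    rw [hvelim, ha0, hb0]
    ext (i | i) <;> simp
  have hNinj : Function.Injective N.mulVec := by
    intro u v huv
    have := hNzero (u - v) (by rw [Matrix.mulVec_sub, huv, sub_self])
    exact sub_eq_zero.mp this
  have hNsurj : Function.Surjective N.mulVec := by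
    rw [← Matrix.coe_mulVecLin] at hNinj ⊢
    refine (LinearMap.injective_iff_surjective_of_finrank_eq_finrank ?_).mp hNinj
    simp only [Module.finrank_pi]
    simp [Fintype.card_sum]
    omega
  have key : ∀ x, A *ᵥ x = B *ᵥ x := by
    intro x
    obtain ⟨y, hy⟩ := hNsurj x
    rw [← hy]
    have hyelim : y = Sum.elim (y ∘ Sum.inl) (y ∘ Sum.inr) := (Sum.elim_comp_inl_inr y).symm
    rw [hyelim, hNdef, fromCols_mulVec_sumElim]
    simp only [Matrix.mulVec_add, Matrix.mulVec_mulVec, e1, e2, e3, e4]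
  have final : A = B := by
    ext i j
    have := congrFun (key (Pi.single j 1)) i
    simpa [Matrix.mulVec_single_one] using this
  exact final
end

section
/- For ρ ∈ (−1/3, 1), with f(ρ) = (ρ, ρ, ρ, ρ, ρ², ρ²)^T so that ḟ(ρ) = (1,1,1,1,2ρ,2ρ)^T, and I(ρ) the 6×6 matrix (1/2)(1−ρ²)^{−4} with the entries given by the circular Gaussian copula Fisher information (rows/columns indexed by (12),(14),(23),(34),(13),(24): diagonal entries ρ⁴+2 for the first four and 2(ρ⁶+ρ⁴+1)/(ρ⁴+1) for the last two, off-diagonal entries 3ρ², ρ⁴+2ρ², −(ρ³+2ρ), 2(ρ⁶+2ρ²)/(ρ⁴+1) as in the stated pattern), one has ḟ(ρ)^T I(ρ) ḟ(ρ) = 4(1−ρ²)^{−2}; equivalently the asymptotic lower bound [ḟ(ρ)^T I(ρ) ḟ(ρ)]^{-1} = (1/4)(1−ρ²)². -/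
set_option maxHeartbeats 2000000


open Matrix

/-- For the four-dimensional circular Gaussian copula with
`f(ρ) = (ρ,ρ,ρ,ρ,ρ²,ρ²)ᵀ`, `ḟ(ρ) = (1,1,1,1,2ρ,2ρ)ᵀ` and Fisher information
`I(ρ) = (1/2)(1−ρ²)⁻⁴ A(ρ)`, one has `ḟ(ρ)ᵀ I(ρ) ḟ(ρ) = 4(1−ρ²)⁻²`, i.e.
the asymptotic lower bound is `(1/4)(1−ρ²)²`. -/
theorem stmt9 (ρ : ℝ) (hρ : ρ ∈ Set.Ioo (-(1 / 3) : ℝ) 1) :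
    let A : Matrix (Fin 6) (Fin 6) ℝ :=
      !![ρ^4+2, 3*ρ^2, 3*ρ^2, ρ^4+2*ρ^2, -(ρ^3+2*ρ), -(ρ^3+2*ρ);
         3*ρ^2, ρ^4+2, ρ^4+2*ρ^2, 3*ρ^2, -(ρ^3+2*ρ), -(ρ^3+2*ρ);
         3*ρ^2, ρ^4+2*ρ^2, ρ^4+2, 3*ρ^2, -(ρ^3+2*ρ), -(ρ^3+2*ρ);
         ρ^4+2*ρ^2, 3*ρ^2, 3*ρ^2, ρ^4+2, -(ρ^3+2*ρ), -(ρ^3+2*ρ);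
         -(ρ^3+2*ρ), -(ρ^3+2*ρ), -(ρ^3+2*ρ), -(ρ^3+2*ρ),
           2*(ρ^6+ρ^4+1)/(ρ^4+1), 2*(ρ^6+2*ρ^2)/(ρ^4+1);
         -(ρ^3+2*ρ), -(ρ^3+2*ρ), -(ρ^3+2*ρ), -(ρ^3+2*ρ),
           2*(ρ^6+2*ρ^2)/(ρ^4+1), 2*(ρ^6+ρ^4+1)/(ρ^4+1)]
    let Imat : Matrix (Fin 6) (Fin 6) ℝ := (1 / 2 * ((1 - ρ^2)^4)⁻¹) • A
    let fdot : Fin 6 → ℝ := ![1, 1, 1, 1, 2*ρ, 2*ρ]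
    fdot ⬝ᵥ (Imat *ᵥ fdot) = 4 * ((1 - ρ^2)^2)⁻¹ ∧
    (fdot ⬝ᵥ (Imat *ᵥ fdot))⁻¹ = 1 / 4 * (1 - ρ^2)^2 := by
  obtain ⟨h1, h2⟩ := hρ
  have hρ2 : ρ^2 < 1 := by nlinarith
  have hne : (1 : ℝ) - ρ^2 ≠ 0 := by nlinarith
  have h4 : (ρ:ℝ)^4 + 1 ≠ 0 := by positivity
  intro A Imat fdot
  have key : fdot ⬝ᵥ (Imat *ᵥ fdot) = 4 * ((1 - ρ^2)^2)⁻¹ := by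
    simp only [Imat, A, fdot, Matrix.smul_mulVec, dotProduct_smul,
      Matrix.cons_mulVec, Matrix.cons_dotProduct, Matrix.dotProduct_of_isEmpty,
      Matrix.empty_mulVec, Matrix.head_cons, Matrix.tail_cons, smul_eq_mul,
      add_zero]
    field_simp
    ring
  refine ⟨key, ?_⟩
  rw [key]
  field_simp
end

section
/- Let θ = Lν + α with L ∈ ℝ^{k×d} of rank d, and let R ∈ ℝ^{k×(k-d)} of rank k−d with L^T R = 0, β = R^T α. For any symmetric positive definite Î, the two expressions θ̃₁ = L(L^T Î L)^{-1} L^T Î (θ̂ − α) + α and θ̃₂ = θ̂ − Î^{-1} R (R^T Î^{-1} R)^{-1} (R^T θ̂ − β) coincide for every θ̂ ∈ ℝ^k. -/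
open Matrix

private lemma inj_of_full_rank {k d : ℕ} (A : Matrix (Fin k) (Fin d) ℝ) (h : A.rank = d) :
    Function.Injective A.mulVec := by
  have h1 : LinearMap.ker A.mulVecLin = ⊥ := by
    rw [← Submodule.finrank_eq_zero (R := ℝ)]
    have h2 := LinearMap.finrank_range_add_finrank_ker A.mulVecLin
    have h3 : Module.finrank ℝ (LinearMap.range A.mulVecLin) = A.rank := rfl
    rw [h3, h, Module.finrank_fintype_fun_eq_card, Fintype.card_fin] at h2
    omega
  exact fun x y hxy => LinearMap.ker_eq_bot.mp h1 hxy

private lemma posdef_conj {k d : ℕ} {M : Matrix (Fin k) (Fin k) ℝ} (hM : M.PosDef)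
    (A : Matrix (Fin k) (Fin d) ℝ) (hA : Function.Injective A.mulVec) :
    (Aᵀ * M * A).PosDef := by
  have hMt : Mᵀ = M := by
    have := hM.isHermitian.eq
    rwa [conjTranspose_eq_transpose_of_trivial] at this
  refine PosDef.of_dotProduct_mulVec_pos ?_ ?_
  · rw [Matrix.IsHermitian, conjTranspose_eq_transpose_of_trivial]
    rw [transpose_mul, transpose_mul, transpose_transpose, hMt, Matrix.mul_assoc]
  · intro x hx
    have hAx : A *ᵥ x ≠ 0 := by
      intro h
      exact hx (hA (by simpa using h))
    have := hM.dotProduct_mulVec_pos hAx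
    simpa [star_trivial, ← mulVec_mulVec, dotProduct_mulVec, vecMul_transpose] using this

/-- Under the linear restriction `θ = Lν + α` with matching `R`
(`LᵀR = 0`, `(L R)` nonsingular, `β = Rᵀα`), the two forms of the constrained
estimator coincide:
`L(LᵀÎL)⁻¹LᵀÎ(θ̂−α)+α = θ̂ − Î⁻¹R(RᵀÎ⁻¹R)⁻¹(Rᵀθ̂−β)` for every `θ̂`. -/
theorem stmt15 {k d : ℕ} (Ihat : Matrix (Fin k) (Fin k) ℝ)
    (hI : Ihat.PosDef) (hIsym : Ihat.IsSymm)
    (L : Matrix (Fin k) (Fin d) ℝ) (R : Matrix (Fin k) (Fin (k - d)) ℝ)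
    (hL : L.rank = d) (hR : R.rank = k - d)
    (hLR : Lᵀ * R = 0)
    (hfull : (Matrix.fromCols L R).rank = k)
    (α : Fin k → ℝ) (θhat : Fin k → ℝ) :
    (L * (Lᵀ * Ihat * L)⁻¹ * Lᵀ * Ihat) *ᵥ (θhat - α) + α =
      θhat - (Ihat⁻¹ * R * (Rᵀ * Ihat⁻¹ * R)⁻¹) *ᵥ (Rᵀ *ᵥ θhat - Rᵀ *ᵥ α) := by
  have hdk : d ≤ k := by
    have := L.rank_le_card_height
    simpa [hL] using this
  have injL : Function.Injective L.mulVec := inj_of_full_rank L hL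
  have injR : Function.Injective R.mulVec := inj_of_full_rank R hR
  have hIinv : Ihat⁻¹.PosDef := hI.inv
  have hS : (Lᵀ * Ihat * L).PosDef := posdef_conj hI L injL
  have hT : (Rᵀ * Ihat⁻¹ * R).PosDef := posdef_conj hIinv R injR
  have hSinv : (Lᵀ * Ihat * L)⁻¹ * (Lᵀ * Ihat * L) = 1 :=
    nonsing_inv_mul _ ((Matrix.isUnit_iff_isUnit_det _).mp hS.isUnit)
  have hTinv : (Rᵀ * Ihat⁻¹ * R)⁻¹ * (Rᵀ * Ihat⁻¹ * R) = 1 :=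
    nonsing_inv_mul _ ((Matrix.isUnit_iff_isUnit_det _).mp hT.isUnit)
  have hII : Ihat * Ihat⁻¹ = 1 :=
    mul_nonsing_inv _ ((Matrix.isUnit_iff_isUnit_det _).mp hI.isUnit)
  have hIIl : Ihat⁻¹ * Ihat = 1 :=
    nonsing_inv_mul _ ((Matrix.isUnit_iff_isUnit_det _).mp hI.isUnit)
  -- surjectivity of C := fromColumns L (Ihat⁻¹ * R)
  set C : Matrix (Fin k) (Fin d ⊕ Fin (k - d)) ℝ := fromCols L (Ihat⁻¹ * R) with hCdef
  have hCinj : Function.Injective C.mulVecLin := by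
    rw [← LinearMap.ker_eq_bot]
    rw [Submodule.eq_bot_iff]
    intro u hu
    have hu' : C *ᵥ u = 0 := hu
    have husplit : u = Sum.elim (u ∘ Sum.inl) (u ∘ Sum.inr) := by
      funext i; cases i <;> rfl
    rw [husplit, fromCols_mulVec_sumElim] at hu'
    -- apply Lᵀ * Ihat
    have h1 : (Lᵀ * Ihat) *ᵥ (L *ᵥ (u ∘ Sum.inl) + (Ihat⁻¹ * R) *ᵥ (u ∘ Sum.inr)) = 0 := by
      rw [hu', mulVec_zero]
    rw [mulVec_add, mulVec_mulVec, mulVec_mulVec, show Lᵀ * Ihat * (Ihat⁻¹ * R) = 0 by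
      rw [Matrix.mul_assoc, ← Matrix.mul_assoc Ihat, hII, Matrix.one_mul, hLR]] at h1
    rw [zero_mulVec, add_zero] at h1
    have hul : u ∘ Sum.inl = 0 := by
      have := congrArg (fun w => (Lᵀ * Ihat * L)⁻¹ *ᵥ w) h1
      simpa [mulVec_mulVec, ← Matrix.mul_assoc, hSinv] using this
    have h2 : (Ihat⁻¹ * R) *ᵥ (u ∘ Sum.inr) = 0 := by
      rw [hul] at hu'; simpa using hu'
    have h3 : R *ᵥ (u ∘ Sum.inr) = 0 := by
      have := congrArg (fun w => Ihat *ᵥ w) h2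
      simpa [mulVec_mulVec, ← Matrix.mul_assoc, hII] using this
    have hur : u ∘ Sum.inr = 0 := injR (by simpa using h3)
    funext i
    cases i with
    | inl j => exact congrFun hul j
    | inr j => exact congrFun hur j
  have hCsurj : Function.Surjective C.mulVecLin := by
    have hfr : Module.finrank ℝ ((Fin d ⊕ Fin (k - d)) → ℝ) = Module.finrank ℝ (Fin k → ℝ) := by
      simp [Module.finrank_fintype_fun_eq_card]
      omega
    exact (LinearMap.injective_iff_surjective_of_finrank_eq_finrank hfr).mp hCinj
  obtain ⟨u, hu⟩ := hCsurj (θhat - α)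
  set a := u ∘ Sum.inl
  set b := u ∘ Sum.inr
  have husplit : u = Sum.elim a b := by funext i; cases i <;> rfl
  have hv : θhat - α = L *ᵥ a + (Ihat⁻¹ * R) *ᵥ b := by
    rw [← hu]; show C *ᵥ u = _
    rw [husplit, fromCols_mulVec_sumElim]
  -- compute left projection
  have hP : (L * (Lᵀ * Ihat * L)⁻¹ * Lᵀ * Ihat) *ᵥ (θhat - α) = L *ᵥ a := by
    rw [hv, mulVec_add, mulVec_mulVec, mulVec_mulVec]
    have e1 : L * (Lᵀ * Ihat * L)⁻¹ * (Lᵀ * Ihat * L) = L := by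
      rw [Matrix.mul_assoc, hSinv, Matrix.mul_one]
    have e2 : L * (Lᵀ * Ihat * L)⁻¹ * Lᵀ * Ihat * (Ihat⁻¹ * R) = 0 := by
      rw [Matrix.mul_assoc _ Ihat, ← Matrix.mul_assoc Ihat, hII, Matrix.one_mul,
        Matrix.mul_assoc _ Lᵀ, hLR, Matrix.mul_zero]
    rw [show L * (Lᵀ * Ihat * L)⁻¹ * Lᵀ * Ihat * L = L by
        rw [Matrix.mul_assoc (L * (Lᵀ * Ihat * L)⁻¹ * Lᵀ), Matrix.mul_assoc (L * (Lᵀ * Ihat * L)⁻¹),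
          ← Matrix.mul_assoc Lᵀ Ihat L]; exact e1,
      e2, zero_mulVec, add_zero]
  -- compute right correction term
  have hRv : Rᵀ *ᵥ θhat - Rᵀ *ᵥ α = (Rᵀ * Ihat⁻¹ * R) *ᵥ b := by
    rw [← mulVec_sub, hv, mulVec_add, mulVec_mulVec, mulVec_mulVec]
    have e3 : Rᵀ * L = 0 := by
      have := congrArg Matrix.transpose hLR
      simpa [transpose_mul] using this
    rw [e3, zero_mulVec, zero_add, ← Matrix.mul_assoc]
  have hQ : (Ihat⁻¹ * R * (Rᵀ * Ihat⁻¹ * R)⁻¹) *ᵥ (Rᵀ *ᵥ θhat - Rᵀ *ᵥ α) = (Ihat⁻¹ * R) *ᵥ b := by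
    rw [hRv, mulVec_mulVec, Matrix.mul_assoc (Ihat⁻¹ * R), hTinv, Matrix.mul_one]
  rw [hP, hQ]
  have := hv
  funext i
  have h := congrFun hv i
  simp only [Pi.sub_apply, Pi.add_apply] at h ⊢
  linarith
end
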